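/- Let X be a positive random variable with finite mean ⟨X⟩ such that E[X | X > x] ≥ ⟨X⟩ + β₀x for all 0 < x < ‖X‖_∞, with β₀ > 0. Then for every ξ > 0, E[X; X < (1+ξ)⟨X⟩] ≤ 2(1+ξ)/(√(1+(1+ξ)β₀)+1) · ⟨X⟩. -/

import Mathlib

open MeasureTheory

/-- If a positive integrable random variable `X` satisfies
`E[X | X > x] ≥ ⟨X⟩ + β₀x` for `0 < x < ‖X‖_∞` with `β₀ > 0`, then for every `ξ > 0`,
`E[X; X < (1+ξ)⟨X⟩] ≤ 2(1+ξ)/(√(1+(1+ξ)β₀)+1)·⟨X⟩`. -/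
theorem stmt_3 {Ω : Type*} [MeasurableSpace Ω] (μ : Measure Ω) [IsProbabilityMeasure μ]
    (X : Ω → ℝ) (hXm : Measurable X) (hXpos : ∀ᵐ ω ∂μ, 0 < X ω)
    (hX : Integrable X μ)
    (β₀ : ℝ) (hβ₀ : 0 < β₀)
    (hcond : ∀ x : ℝ, 0 < x → ENNReal.ofReal x < eLpNorm X ⊤ μ →
      ((∫ ω, X ω ∂μ) + β₀ * x) * (μ {ω | x < X ω}).toReal ≤
        ∫ ω in {ω | x < X ω}, X ω ∂μ)
    (ξ : ℝ) (hξ : 0 < ξ) :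
    ∫ ω in {ω | X ω < (1 + ξ) * ∫ x, X x ∂μ}, X ω ∂μ ≤
      2 * (1 + ξ) / (Real.sqrt (1 + (1 + ξ) * β₀) + 1) * ∫ x, X x ∂μ := by
  have hXnn : ∀ᵐ ω ∂μ, 0 ≤ X ω := hXpos.mono fun ω h => h.le
  set m := ∫ x, X x ∂μ with hm_def
  have hm : 0 < m := by
    rw [hm_def, integral_pos_iff_support_of_nonneg_ae hXnn hX, pos_iff_ne_zero]
    intro h0
    have h1 : ∀ᵐ ω ∂μ, X ω = 0 := by
      rw [ae_iff]
      simpa [Function.support] using h0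
    have h2 : ∀ᵐ (_ : Ω) ∂μ, False := by
      filter_upwards [h1, hXpos] with ω e p; exact p.ne' e
    simpa [ae_iff] using h2
  set s := Real.sqrt (1 + (1 + ξ) * β₀) with hs_def
  have hs2 : s ^ 2 = 1 + (1 + ξ) * β₀ := Real.sq_sqrt (by nlinarith)
  have hs1 : 1 < s := by
    nlinarith [Real.sqrt_nonneg (1 + (1 + ξ) * β₀)]
  set xs := m * (s - 1) / β₀ with hxs_def
  have hxs : 0 < xs := div_pos (mul_pos hm (by linarith)) hβ₀
  have hxsb : β₀ * xs = m * (s - 1) := by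
    rw [hxs_def]; field_simp
  have hRHS : 2 * (1 + ξ) / (s + 1) * m = 2 * m * (s - 1) / β₀ := by
    rw [div_mul_eq_mul_div, div_eq_div_iff (by positivity : (0:ℝ) < s + 1).ne' hβ₀.ne']
    nlinarith [hs2]
  rw [hRHS]
  clear_value m s xs
  -- mean ≤ c whenever X ≤ c a.e.
  have hmean_le : ∀ c : ℝ, (∀ᵐ ω ∂μ, X ω ≤ c) → m ≤ c := by
    intro c hc
    have := integral_mono_ae hX (integrable_const c) hc
    simpa [hm_def] using this
  have hae_of_eLp : ∀ c : ℝ, 0 ≤ c → eLpNorm X ⊤ μ ≤ ENNReal.ofReal c →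
      ∀ᵐ ω ∂μ, X ω ≤ c := by
    intro c hc hS
    filter_upwards [enorm_ae_le_eLpNormEssSup X μ, hXpos] with ω h hp
    have h2 : (‖X ω‖₊ : ENNReal) ≤ ENNReal.ofReal c := by
      refine h.trans ?_
      rw [← eLpNorm_exponent_top]; exact hS
    rw [← enorm_eq_nnnorm, ← ofReal_norm, Real.norm_of_nonneg hp.le] at h2
    exact (ENNReal.ofReal_le_ofReal_iff hc).mp h2
  by_cases hcase : ENNReal.ofReal xs < eLpNorm X ⊤ μ
  · -- main case: apply hcond at xs
    set A := {ω | xs < X ω} with hA_def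
    have hAm : MeasurableSet A := measurableSet_lt measurable_const hXm
    set p := (μ A).toReal with hp_def
    have hp0 : 0 ≤ p := ENNReal.toReal_nonneg
    have h1 : (m + β₀ * xs) * p ≤ ∫ ω in A, X ω ∂μ := hcond xs hxs hcase
    have h2 : ∫ ω in A, X ω ∂μ ≤ m := by
      rw [hm_def]; exact setIntegral_le_integral hX hXnn
    have hps : p * s ≤ 1 := by
      have hms : m + β₀ * xs = m * s := by rw [hxsb]; ring
      rw [hms] at h1
      nlinarith [h1.trans h2]
    set t := (1 + ξ) * m with ht_def
    have htpos : 0 < t := mul_pos (by linarith) hm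
    set T := {ω | X ω < t} with hT_def
    have hTm : MeasurableSet T := measurableSet_lt hXm measurable_const
    have hsplit : ∫ ω in T, X ω ∂μ =
        ∫ ω in T ∩ A, X ω ∂μ + ∫ ω in T ∩ Aᶜ, X ω ∂μ := by
      have hdisj : Disjoint (T ∩ A) (T ∩ Aᶜ) :=
        Disjoint.mono inf_le_right inf_le_right disjoint_compl_right
      rw [← setIntegral_union hdisj
        (hTm.inter hAm.compl) hX.integrableOn hX.integrableOn,
        Set.inter_union_compl]
    have hb2 : ∫ ω in T ∩ A, X ω ∂μ ≤ t * p := by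
      have := setIntegral_mono_on hX.integrableOn
        (integrableOn_const (measure_lt_top μ _).ne)
        (hTm.inter hAm) (fun ω hω => le_of_lt hω.1)
      rw [setIntegral_const, smul_eq_mul, measureReal_def] at this
      refine this.trans ?_
      have hmono : (μ (T ∩ A)).toReal ≤ p :=
        ENNReal.toReal_mono (measure_ne_top μ A) (measure_mono Set.inter_subset_right)
      nlinarith
    have hcompl : (μ Aᶜ).toReal = 1 - p := by
      rw [measure_compl hAm (measure_ne_top μ A), measure_univ,
        ENNReal.toReal_sub_of_le prob_le_one (by simp)]
      simp [hp_def]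
    have hb1 : ∫ ω in T ∩ Aᶜ, X ω ∂μ ≤ xs * (1 - p) := by
      have := setIntegral_mono_on hX.integrableOn
        (integrableOn_const (measure_lt_top μ _).ne)
        (hTm.inter hAm.compl) (fun ω hω => not_lt.mp hω.2)
      rw [setIntegral_const, smul_eq_mul, measureReal_def] at this
      refine this.trans ?_
      have hmono : (μ (T ∩ Aᶜ)).toReal ≤ (μ Aᶜ).toReal :=
        ENNReal.toReal_mono (measure_ne_top μ _) (measure_mono Set.inter_subset_right)
      rw [hcompl] at hmono
      nlinarith
    have htotal : ∫ ω in T, X ω ∂μ ≤ xs * (1 - p) + t * p := by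
      rw [hsplit]; linarith
    refine htotal.trans ?_
    rw [le_div_iff₀ hβ₀]
    have htb : β₀ * t = (s ^ 2 - 1) * m := by rw [ht_def, hs2]; ring
    nlinarith [hxsb, htb, hps, hp0, hm, hs1,
      mul_nonneg (mul_nonneg hm.le (by linarith : (0:ℝ) ≤ s - 1))
        (by linarith : (0:ℝ) ≤ 1 - p * s)]
  · -- degenerate case: essential sup below xs
    have hS : eLpNorm X ⊤ μ ≤ ENNReal.ofReal xs := not_lt.mp hcase
    have hle : ∀ᵐ ω ∂μ, X ω ≤ xs := hae_of_eLp xs hxs.le hS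
    have hmem : ENNReal.ofReal (m / 2) < eLpNorm X ⊤ μ := by
      by_contra h
      push_neg at h
      have := hmean_le (m / 2) (hae_of_eLp (m / 2) (by linarith) h)
      linarith
    set A₂ := {ω | m / 2 < X ω} with hA₂_def
    have hA₂m : MeasurableSet A₂ := measurableSet_lt measurable_const hXm
    set p₂ := (μ A₂).toReal with hp₂_def
    have h1 : (m + β₀ * (m / 2)) * p₂ ≤ ∫ ω in A₂, X ω ∂μ :=
      hcond (m / 2) (by linarith) hmem
    have h2 : ∫ ω in A₂, X ω ∂μ ≤ xs * p₂ := by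
      have h := setIntegral_mono_ae_restrict (s := A₂) (g := fun _ => xs)
        hX.integrableOn
        (integrableOn_const (measure_lt_top μ A₂).ne)
        (ae_restrict_of_ae hle)
      rw [setIntegral_const, smul_eq_mul, mul_comm] at h
      exact h
    have hp₂pos : 0 < p₂ := by
      rw [hp₂_def, ENNReal.toReal_pos_iff]
      refine ⟨pos_iff_ne_zero.mpr ?_, measure_lt_top μ _⟩
      intro h0
      have hle2 : ∀ᵐ ω ∂μ, X ω ≤ m / 2 := by
        rw [ae_iff]
        have : {ω | ¬ X ω ≤ m / 2} = A₂ := by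
          ext ω; simp [hA₂_def, not_le]
        rw [this]; exact h0
      have := hmean_le (m / 2) hle2
      linarith
    have h3 : m + β₀ * (m / 2) ≤ xs :=
      le_of_mul_le_mul_right (by linarith [h1.trans h2]) hp₂pos
    have h4 : β₀ * (m + β₀ * (m / 2)) ≤ m * (s - 1) := by
      calc β₀ * (m + β₀ * (m / 2)) ≤ β₀ * xs := by nlinarith
        _ = m * (s - 1) := hxsb
    have h5 : ∫ ω in {ω | X ω < (1 + ξ) * m}, X ω ∂μ ≤ m := by
      rw [hm_def]; exact setIntegral_le_integral hX hXnn
    refine h5.trans ?_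
    rw [le_div_iff₀ hβ₀]
    have e1 : 0 ≤ β₀ * (β₀ * (m / 2)) := by
      have := mul_nonneg (mul_nonneg hβ₀.le hβ₀.le) hm.le
      nlinarith
    have e2 : 0 ≤ β₀ * m := mul_nonneg hβ₀.le hm.le
    linarith [h4]
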